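/- Let p, q ≥ 2 and let X = lim←(𝕋, z ↦ z^{pq}) with projections π_n : X → 𝕋. Then the pushforward map (π₀)_* is an affine bijection from the set of ℤ²-invariant regular Borel probability measures on X (for the action generated by coordinatewise p-th and q-th powers) onto the set of regular Borel probability measures μ on 𝕋 satisfying (φ_p)_*μ = (φ_q)_*μ = μ, where φ_p(z) = z^p and φ_q(z) = z^q. -/

import Mathlib

open MeasureTheory

/-- The inverse limit `X = lim← (𝕋, z ↦ z^{pq})` (written additively,
`𝕋 = ℝ/ℤ`). -/
def Xlim (p q : ℕ) : Type :=
  {x : ℕ → AddCircle (1 : ℝ) // ∀ n, (p * q) • x (n + 1) = x n}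

noncomputable instance (p q : ℕ) : TopologicalSpace (Xlim p q) :=
  instTopologicalSpaceSubtype

noncomputable instance (p q : ℕ) : MeasurableSpace (Xlim p q) :=
  Subtype.instMeasurableSpace

/-- The coordinatewise `p`-th power automorphism of `X`. -/
noncomputable def TpX (p q : ℕ) (x : Xlim p q) : Xlim p q :=
  ⟨fun n => p • x.1 n, fun n => by rw [smul_comm, x.2 n]⟩

/-- The coordinatewise `q`-th power automorphism of `X`. -/
noncomputable def TqX (p q : ℕ) (x : Xlim p q) : Xlim p q :=
  ⟨fun n => q • x.1 n, fun n => by rw [smul_comm, x.2 n]⟩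

open Set Function
open scoped ENNReal NNReal

namespace Stmt13Aux

noncomputable section

abbrev Circ : Type := AddCircle (1 : ℝ)

variable (p q : ℕ)

instance : CompactSpace (Xlim p q) := by
  have hcl : IsClosed {x : ℕ → Circ | ∀ n, (p * q) • x (n + 1) = x n} := by
    have h : ∀ n : ℕ, IsClosed {x : ℕ → Circ | (p * q) • x (n + 1) = x n} := fun n =>
      isClosed_eq ((continuous_apply (n + 1)).nsmul (p * q)) (continuous_apply n)
    simpa [Set.setOf_forall] using isClosed_iInter h
  exact isCompact_iff_compactSpace.mp hcl.isCompact

def fPQ : Circ → Circ := fun z => (p * q) • z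

def proj (n : ℕ) : Xlim p q → Circ := fun x => x.1 n

lemma continuous_smulC (k : ℕ) : Continuous (fun z : Circ => k • z) :=
  continuous_id.nsmul k

lemma measurable_smulC (k : ℕ) : Measurable (fun z : Circ => k • z) :=
  (continuous_smulC k).measurable

lemma continuous_proj (n : ℕ) : Continuous (proj p q n) :=
  (continuous_apply n).comp continuous_subtype_val

lemma measurable_proj (n : ℕ) : Measurable (proj p q n) :=
  (measurable_pi_apply n).comp measurable_subtype_coe

lemma measurable_fIter (j : ℕ) : Measurable ((fPQ p q)^[j]) := by
  induction j with
  | zero => simpa using measurable_id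
  | succ j ih =>
    rw [Function.iterate_succ]
    exact ih.comp (measurable_smulC (p * q))

lemma proj_eq_iterate (x : Xlim p q) (k j : ℕ) :
    x.1 k = (fPQ p q)^[j] (x.1 (k + j)) := by
  induction j with
  | zero => rfl
  | succ j ih =>
    rw [ih, show k + (j + 1) = (k + j) + 1 from rfl, Function.iterate_succ_apply]
    exact congrArg _ (x.2 (k + j)).symm

lemma cyl_lift {j N : ℕ} (h : j ≤ N) (B : Set Circ) :
    proj p q j ⁻¹' B = proj p q N ⁻¹' ((fPQ p q)^[N - j] ⁻¹' B) := by
  ext x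
  simp only [mem_preimage, proj]
  rw [show x.1 j = (fPQ p q)^[N - j] (x.1 N) from by
    simpa [Nat.add_sub_cancel' h] using proj_eq_iterate p q x j (N - j)]

lemma proj_surjective (hpq : p * q ≠ 0) (N : ℕ) :
    Function.Surjective (proj p q N) := by
  intro z
  set r : Circ → Circ := fun w => DivisibleBy.div w ((p * q : ℕ) : ℤ) with hr_def
  have hr : ∀ w, fPQ p q (r w) = w := by
    intro w
    have h := DivisibleBy.div_cancel (α := ℤ) (A := Circ) (n := ((p * q : ℕ) : ℤ)) w
      (by exact_mod_cast hpq)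
    rw [show fPQ p q (r w) = (((p * q : ℕ) : ℤ) • r w) from (natCast_zsmul _ _).symm]
    exact h
  refine ⟨⟨fun n => if h : N ≤ n then r^[n - N] z else (fPQ p q)^[N - n] z, ?_⟩, ?_⟩
  · intro n
    show fPQ p q _ = _
    dsimp only
    by_cases h1 : N ≤ n
    · have h2 : N ≤ n + 1 := h1.trans (Nat.le_succ n)
      rw [dif_pos h1, dif_pos h2, show n + 1 - N = (n - N) + 1 by omega,
        Function.iterate_succ_apply']
      exact hr _
    · by_cases h2 : N ≤ n + 1
      · rw [dif_pos h2, dif_neg h1, show n + 1 - N = 0 by omega,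
          show N - n = 1 by omega]
        simp
      · rw [dif_neg h2, dif_neg h1, show N - n = (N - (n + 1)) + 1 by omega,
          Function.iterate_succ_apply']
  · show (if h : N ≤ N then r^[N - N] z else (fPQ p q)^[N - N] z) = z
    simp


def cylSet : Set (Set (Xlim p q)) :=
  {S | ∃ n B, MeasurableSet B ∧ S = proj p q n ⁻¹' B}

lemma isPiSystem_cyl : IsPiSystem (cylSet p q) := by
  rintro S1 ⟨n1, B1, hB1, rfl⟩ S2 ⟨n2, B2, hB2, rfl⟩ -
  exact ⟨max n1 n2,
    (fPQ p q)^[max n1 n2 - n1] ⁻¹' B1 ∩ (fPQ p q)^[max n1 n2 - n2] ⁻¹' B2,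
    ((measurable_fIter p q _) hB1).inter ((measurable_fIter p q _) hB2), by
      rw [preimage_inter, ← cyl_lift p q (le_max_left n1 n2),
        ← cyl_lift p q (le_max_right n1 n2)]⟩

lemma gen_eq :
    (inferInstance : MeasurableSpace (Xlim p q)) =
      MeasurableSpace.generateFrom (cylSet p q) := by
  apply le_antisymm
  · have h1 : (inferInstance : MeasurableSpace (Xlim p q)) =
        ⨆ n, MeasurableSpace.comap (proj p q n) inferInstance := by
      show MeasurableSpace.comap (Subtype.val) MeasurableSpace.pi = _
      rw [show (MeasurableSpace.pi : MeasurableSpace (ℕ → Circ)) =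
        ⨆ n, MeasurableSpace.comap (fun b => b n) inferInstance from rfl,
        MeasurableSpace.comap_iSup]
      exact iSup_congr fun n => MeasurableSpace.comap_comp
    rw [h1]
    refine iSup_le fun n => ?_
    intro s hs
    obtain ⟨B, hB, rfl⟩ := hs
    exact MeasurableSpace.measurableSet_generateFrom ⟨n, B, hB, rfl⟩
  · exact MeasurableSpace.generateFrom_le (by
      rintro S ⟨n, B, hB, rfl⟩
      exact measurable_proj p q n hB)

variable (ν : Measure Circ)

def Rep (S : Set (Xlim p q)) : Type :=
  {r : ℕ × Set Circ // MeasurableSet r.2 ∧ S = proj p q r.1 ⁻¹' r.2}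

def mFun (S : Set (Xlim p q)) : ℝ≥0∞ :=
  ⨅ (r : Rep p q S), ν r.1.2

lemma mFun_le {n : ℕ} {B : Set Circ} (hB : MeasurableSet B) :
    mFun p q ν (proj p q n ⁻¹' B) ≤ ν B :=
  iInf_le _ (⟨(n, B), hB, rfl⟩ : Rep p q (proj p q n ⁻¹' B))

lemma mFun_empty : mFun p q ν ∅ = 0 :=
  le_antisymm ((iInf_le _ (⟨(0, ∅), MeasurableSet.empty, by simp⟩ : Rep p q ∅)).trans (by simp))
    zero_le

lemma measurable_fPQ : Measurable (fPQ p q) := measurable_smulC (p * q)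

lemma map_fPQ (hpν : ν.map (fun z => p • z) = ν) (hqν : ν.map (fun z => q • z) = ν) :
    ν.map (fPQ p q) = ν := by
  have h : fPQ p q = (fun z : Circ => p • z) ∘ (fun z : Circ => q • z) := by
    funext z
    show (p * q) • z = p • q • z
    rw [mul_comm]
    exact mul_nsmul z q p
  rw [h, ← Measure.map_map (measurable_smulC p) (measurable_smulC q), hqν, hpν]

lemma map_fPQ_iter (hpν : ν.map (fun z => p • z) = ν)
    (hqν : ν.map (fun z => q • z) = ν) (j : ℕ) :
    ν.map ((fPQ p q)^[j]) = ν := by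
  induction j with
  | zero => simpa using Measure.map_id
  | succ j ih =>
    rw [Function.iterate_succ,
      ← Measure.map_map (measurable_fIter p q j) (measurable_fPQ p q),
      map_fPQ p q ν hpν hqν, ih]

lemma nu_preimage_iter (hpν : ν.map (fun z => p • z) = ν)
    (hqν : ν.map (fun z => q • z) = ν) (j : ℕ) {B : Set Circ} (hB : MeasurableSet B) :
    ν ((fPQ p q)^[j] ⁻¹' B) = ν B := by
  conv_rhs => rw [← map_fPQ_iter p q ν hpν hqν j]
  rw [Measure.map_apply (measurable_fIter p q j) hB]


lemma key_subadd (hprob : IsProbabilityMeasure ν) (hreg : ν.Regular)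
    (hpν : ν.map (fun z => p • z) = ν) (hqν : ν.map (fun z => q • z) = ν)
    (hpq : p * q ≠ 0) {n : ℕ} {B : Set Circ} (hB : MeasurableSet B)
    (t : ℕ → Set (Xlim p q)) (hcov : proj p q n ⁻¹' B ⊆ ⋃ i, t i) :
    ν B ≤ ∑' i, mFun p q ν (t i) := by
  haveI := hprob
  haveI := hreg
  refine ENNReal.le_of_forall_pos_le_add fun ε hε hsum => ?_
  set η : ℝ≥0 := ε / 4 with hη_def
  have hη : (η : ℝ≥0∞) ≠ 0 := by
    exact_mod_cast (div_pos hε (by norm_num)).ne'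
  have hpow : ∀ i : ℕ, (η : ℝ≥0∞) * 2⁻¹ ^ (i + 1) ≠ 0 := fun i =>
    mul_ne_zero hη (pow_ne_zero _ (ENNReal.inv_ne_zero.mpr (by norm_num)))
  have hfin : ∀ i, mFun p q ν (t i) ≠ ∞ := fun i =>
    ((ENNReal.le_tsum i).trans_lt hsum).ne
  have hrep : ∀ i, ∃ (k : ℕ) (D : Set Circ), MeasurableSet D ∧
      t i = proj p q k ⁻¹' D ∧ ν D ≤ mFun p q ν (t i) + η * 2⁻¹ ^ (i + 1) := by
    intro i
    have hlt : mFun p q ν (t i) < mFun p q ν (t i) + η * 2⁻¹ ^ (i + 1) :=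
      ENNReal.lt_add_right (hfin i) (hpow i)
    rw [mFun] at hlt
    obtain ⟨⟨⟨k, D⟩, hD, hrepr⟩, hlt'⟩ := iInf_lt_iff.mp (lt_of_le_of_lt (le_of_eq rfl) hlt)
    exact ⟨k, D, hD, hrepr, hlt'.le⟩
  choose k D hD ht hDle using hrep
  have hU : ∀ i, ∃ U, D i ⊆ U ∧ IsOpen U ∧ ν U ≤ ν (D i) + η * 2⁻¹ ^ (i + 1) := by
    intro i
    obtain ⟨U, hDU, hUo, hUlt⟩ :=
      Set.exists_isOpen_lt_add (D i) (measure_ne_top ν _) (hpow i)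
    exact ⟨U, hDU, hUo, hUlt.le⟩
  choose U hDU hUo hUle using hU
  obtain ⟨K, hKB, hKc, hKlt⟩ :=
    hB.exists_isCompact_lt_add (μ := ν) (measure_ne_top ν B) hη
  have hcov2 : proj p q n ⁻¹' K ⊆ ⋃ i, proj p q (k i) ⁻¹' (U i) := by
    refine (preimage_mono hKB).trans (hcov.trans (iUnion_mono fun i => ?_))
    rw [ht i]
    exact preimage_mono (hDU i)
  obtain ⟨s, hs⟩ :=
    ((hKc.isClosed.preimage (continuous_proj p q n)).isCompact).elim_finite_subcover
      (fun i => proj p q (k i) ⁻¹' (U i))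
      (fun i => (hUo i).preimage (continuous_proj p q (k i))) hcov2
  set N := max n (s.sup k) with hN
  have hkN : ∀ i ∈ s, k i ≤ N := fun i hi =>
    le_trans (Finset.le_sup hi) (le_max_right _ _)
  have hnN : n ≤ N := le_max_left _ _
  have hsub : (fPQ p q)^[N - n] ⁻¹' K ⊆ ⋃ i ∈ s, (fPQ p q)^[N - k i] ⁻¹' (U i) := by
    have h2 : proj p q N ⁻¹' ((fPQ p q)^[N - n] ⁻¹' K) ⊆
        proj p q N ⁻¹' (⋃ i ∈ s, (fPQ p q)^[N - k i] ⁻¹' (U i)) := by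
      rw [preimage_iUnion₂, ← cyl_lift p q hnN]
      refine hs.trans (le_of_eq (iUnion₂_congr fun i hi => ?_))
      exact cyl_lift p q (hkN i hi) (U i)
    exact (Set.preimage_subset_preimage_iff (by
      rw [(proj_surjective p q hpq N).range_eq]; exact subset_univ _)).mp h2
  have hgeo : ∑' i : ℕ, (η : ℝ≥0∞) * 2⁻¹ ^ (i + 1) = η := by
    have h1 : (fun i : ℕ => (η : ℝ≥0∞) * 2⁻¹ ^ (i + 1)) =
        fun i : ℕ => ((η : ℝ≥0∞) * 2⁻¹) * 2⁻¹ ^ i := by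
      funext i
      rw [pow_succ', mul_assoc]
    rw [h1, ENNReal.tsum_mul_left, ENNReal.tsum_geometric, ENNReal.one_sub_inv_two,
      inv_inv, mul_assoc, ENNReal.inv_mul_cancel (by norm_num) (by norm_num), mul_one]
  have hη3 : (η : ℝ≥0∞) + η + η ≤ ε := by
    rw [← ENNReal.coe_add, ← ENNReal.coe_add, ENNReal.coe_le_coe]
    rw [← NNReal.coe_le_coe]
    push_cast [hη_def]
    have := ε.coe_nonneg
    linarith
  calc ν B ≤ ν K + η := hKlt.le
    _ = ν ((fPQ p q)^[N - n] ⁻¹' K) + η := by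
        rw [nu_preimage_iter p q ν hpν hqν _ hKc.isClosed.measurableSet]
    _ ≤ ν (⋃ i ∈ s, (fPQ p q)^[N - k i] ⁻¹' (U i)) + η :=
        add_le_add_left (measure_mono hsub) _
    _ ≤ (∑ i ∈ s, ν ((fPQ p q)^[N - k i] ⁻¹' (U i))) + η :=
        add_le_add_left (measure_biUnion_finset_le s _) _
    _ = (∑ i ∈ s, ν (U i)) + η := by
        refine congrArg (· + (η : ℝ≥0∞)) (Finset.sum_congr rfl fun i _ => ?_)
        exact nu_preimage_iter p q ν hpν hqν _ (hUo i).measurableSet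
    _ ≤ (∑ i ∈ s, (mFun p q ν (t i) + η * 2⁻¹ ^ (i + 1) + η * 2⁻¹ ^ (i + 1))) + η := by
        refine add_le_add_left (Finset.sum_le_sum fun i _ => ?_) _
        exact (hUle i).trans (add_le_add_left (hDle i) _)
    _ ≤ (∑' i, (mFun p q ν (t i) + η * 2⁻¹ ^ (i + 1) + η * 2⁻¹ ^ (i + 1))) + η :=
        add_le_add_left (ENNReal.sum_le_tsum s) _
    _ = ((∑' i, mFun p q ν (t i)) + η + η) + η := by
        rw [ENNReal.tsum_add, ENNReal.tsum_add, hgeo]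
    _ ≤ (∑' i, mFun p q ν (t i)) + ε := by
        rw [add_assoc, add_assoc, ← add_assoc (η : ℝ≥0∞)]
        exact add_le_add_right hη3 _


def outerX : OuterMeasure (Xlim p q) :=
  OuterMeasure.ofFunction (mFun p q ν) (mFun_empty p q ν)

lemma cyl_caratheodory (hpν : ν.map (fun z => p • z) = ν)
    (hqν : ν.map (fun z => q • z) = ν) {n : ℕ} {B : Set Circ}
    (hB : MeasurableSet B) :
    MeasurableSet[(outerX p q ν).caratheodory] (proj p q n ⁻¹' B) := by
  apply MeasureTheory.OuterMeasure.ofFunction_caratheodory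
  intro t
  refine le_iInf fun r => ?_
  obtain ⟨⟨m, Dm⟩, hDm, rfl⟩ := r
  set N := max m n with hN
  have hmN : m ≤ N := le_max_left _ _
  have hnN : n ≤ N := le_max_right _ _
  have hBmeas : MeasurableSet ((fPQ p q)^[N - n] ⁻¹' B) := measurable_fIter p q _ hB
  have hDmeas : MeasurableSet ((fPQ p q)^[N - m] ⁻¹' Dm) := measurable_fIter p q _ hDm
  have e1 : proj p q m ⁻¹' Dm ∩ proj p q n ⁻¹' B =
      proj p q N ⁻¹' ((fPQ p q)^[N - m] ⁻¹' Dm ∩ (fPQ p q)^[N - n] ⁻¹' B) := by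
    rw [cyl_lift p q hmN Dm, cyl_lift p q hnN B, preimage_inter]
  have e2 : proj p q m ⁻¹' Dm \ proj p q n ⁻¹' B =
      proj p q N ⁻¹' ((fPQ p q)^[N - m] ⁻¹' Dm \ (fPQ p q)^[N - n] ⁻¹' B) := by
    rw [cyl_lift p q hmN Dm, cyl_lift p q hnN B, preimage_diff]
  calc mFun p q ν (proj p q m ⁻¹' Dm ∩ proj p q n ⁻¹' B)
        + mFun p q ν (proj p q m ⁻¹' Dm \ proj p q n ⁻¹' B)
      ≤ ν ((fPQ p q)^[N - m] ⁻¹' Dm ∩ (fPQ p q)^[N - n] ⁻¹' B)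
        + ν ((fPQ p q)^[N - m] ⁻¹' Dm \ (fPQ p q)^[N - n] ⁻¹' B) := by
        refine add_le_add ?_ ?_
        · rw [e1]; exact mFun_le p q ν (hDmeas.inter hBmeas)
        · rw [e2]; exact mFun_le p q ν (hDmeas.diff hBmeas)
    _ = ν ((fPQ p q)^[N - m] ⁻¹' Dm) := measure_inter_add_diff _ hBmeas
    _ = ν Dm := nu_preimage_iter p q ν hpν hqν _ hDm

lemma inst_le_car (hpν : ν.map (fun z => p • z) = ν)
    (hqν : ν.map (fun z => q • z) = ν) :
    (inferInstance : MeasurableSpace (Xlim p q)) ≤ (outerX p q ν).caratheodory := by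
  rw [gen_eq]
  refine MeasurableSpace.generateFrom_le ?_
  rintro S ⟨n, B, hB, rfl⟩
  exact cyl_caratheodory p q ν hpν hqν hB

lemma outer_cyl_eq (hprob : IsProbabilityMeasure ν) (hreg : ν.Regular)
    (hpν : ν.map (fun z => p • z) = ν) (hqν : ν.map (fun z => q • z) = ν)
    (hpq : p * q ≠ 0) {n : ℕ} {B : Set Circ} (hB : MeasurableSet B) :
    outerX p q ν (proj p q n ⁻¹' B) = ν B := by
  refine le_antisymm ((OuterMeasure.ofFunction_le _).trans (mFun_le p q ν hB)) ?_
  rw [outerX, OuterMeasure.ofFunction_apply]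
  exact le_iInf₂ fun t ht => key_subadd p q ν hprob hreg hpν hqν hpq hB t ht

lemma exists_invariant (hp2 : 2 ≤ p) (hq2 : 2 ≤ q) (hprob : IsProbabilityMeasure ν)
    (hreg : ν.Regular) (hpν : ν.map (fun z => p • z) = ν)
    (hqν : ν.map (fun z => q • z) = ν) :
    ∃ μ : Measure (Xlim p q), IsProbabilityMeasure μ ∧
      (∀ {n : ℕ} {B : Set Circ}, MeasurableSet B → μ (proj p q n ⁻¹' B) = ν B) ∧
      μ.map (fun x => x.1 0) = ν := by
  haveI := hprob
  have hpq : p * q ≠ 0 := Nat.mul_ne_zero (by omega) (by omega)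
  set μ : Measure (Xlim p q) := (outerX p q ν).toMeasure (inst_le_car p q ν hpν hqν) with hμ
  have hcyl : ∀ {n : ℕ} {B : Set Circ}, MeasurableSet B →
      μ (proj p q n ⁻¹' B) = ν B := by
    intro n B hB
    rw [hμ, toMeasure_apply _ _ ((measurable_proj p q n) hB)]
    exact outer_cyl_eq p q ν hprob hreg hpν hqν hpq hB
  have hprobμ : IsProbabilityMeasure μ := by
    constructor
    have h1 : (univ : Set (Xlim p q)) = proj p q 0 ⁻¹' univ := by simp
    rw [h1, hcyl MeasurableSet.univ]
    exact measure_univ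
  refine ⟨μ, hprobμ, fun hB => hcyl hB, ?_⟩
  refine Measure.ext fun S hS => ?_
  exact (Measure.map_apply (measurable_proj p q 0) hS).trans (hcyl hS)


instance : TopologicalSpace.PseudoMetrizableSpace (Xlim p q) :=
  inferInstanceAs (TopologicalSpace.PseudoMetrizableSpace
    ↥{x : ℕ → Circ | ∀ n, (p * q) • x (n + 1) = x n})

instance : BorelSpace (Xlim p q) :=
  inferInstanceAs (BorelSpace ↥{x : ℕ → Circ | ∀ n, (p * q) • x (n + 1) = x n})

lemma measurable_coordSmul (r : ℕ) (T : Xlim p q → Xlim p q)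
    (hT : ∀ x n, (T x).1 n = r • x.1 n) : Measurable T := by
  have h : Measurable fun x : Xlim p q => (T x).1 := by
    refine measurable_pi_lambda _ fun n => ?_
    have e : (fun x : Xlim p q => (T x).1 n) = fun x : Xlim p q => r • x.1 n := by
      funext x; exact hT x n
    rw [e]
    exact (measurable_smulC r).comp (measurable_proj p q n)
  exact h.subtype_mk

lemma proj_comp_iter (Tp Tq : Xlim p q → Xlim p q)
    (hp' : ∀ x n, (Tp x).1 n = p • x.1 n) (hq' : ∀ x n, (Tq x).1 n = q • x.1 n) :
    ∀ (j m : ℕ) (x : Xlim p q), ((Tp ∘ Tq)^[j] x).1 (m + j) = x.1 m := by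
  intro j
  induction j with
  | zero => intro m x; rfl
  | succ j ih =>
    intro m x
    rw [Function.iterate_succ_apply, show m + (j + 1) = (m + 1) + j by omega, ih (m + 1)]
    show (Tp (Tq x)).1 (m + 1) = x.1 m
    rw [hp', hq', ← mul_nsmul (x.1 (m + 1)) q p, mul_comm q p]
    exact x.2 m

lemma map_eval (μ : Measure (Xlim p q)) (Tp Tq : Xlim p q → Xlim p q)
    (hp' : ∀ x n, (Tp x).1 n = p • x.1 n) (hq' : ∀ x n, (Tq x).1 n = q • x.1 n)
    (hinvp : μ.map Tp = μ) (hinvq : μ.map Tq = μ) {n : ℕ} {B : Set Circ}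
    (hB : MeasurableSet B) :
    μ (proj p q n ⁻¹' B) = μ.map (fun x => x.1 0) B := by
  have hTpm : Measurable Tp := measurable_coordSmul p q p Tp hp'
  have hTqm : Measurable Tq := measurable_coordSmul p q q Tq hq'
  have hSm : Measurable (Tp ∘ Tq) := hTpm.comp hTqm
  have hSi : ∀ j, Measurable ((Tp ∘ Tq)^[j]) := by
    intro j; induction j with
    | zero => simpa using measurable_id
    | succ j ih => rw [Function.iterate_succ]; exact ih.comp hSm
  have h1 : μ.map (Tp ∘ Tq) = μ := by
    rw [← Measure.map_map hTpm hTqm, hinvq, hinvp]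
  have hSiter : ∀ j, μ.map ((Tp ∘ Tq)^[j]) = μ := by
    intro j; induction j with
    | zero => simpa using Measure.map_id
    | succ j ih =>
      rw [Function.iterate_succ, ← Measure.map_map (hSi j) hSm, h1, ih]
  have e : ((Tp ∘ Tq)^[n]) ⁻¹' (proj p q n ⁻¹' B) = proj p q 0 ⁻¹' B := by
    ext x
    simp only [mem_preimage, proj]
    rw [show ((Tp ∘ Tq)^[n] x).1 n = x.1 0 from by
      simpa using proj_comp_iter p q Tp Tq hp' hq' n 0 x]
  calc μ (proj p q n ⁻¹' B)
      = μ.map ((Tp ∘ Tq)^[n]) (proj p q n ⁻¹' B) := by rw [hSiter n]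
    _ = μ (((Tp ∘ Tq)^[n]) ⁻¹' (proj p q n ⁻¹' B)) :=
        Measure.map_apply (hSi n) ((measurable_proj p q n) hB)
    _ = μ (proj p q 0 ⁻¹' B) := by rw [e]
    _ = μ.map (fun x => x.1 0) B :=
        (Measure.map_apply (measurable_proj p q 0) hB).symm

end

end Stmt13Aux

open Stmt13Aux in
/-- Pushforward along `π₀` is an affine bijection from the `ℤ²`-invariant
regular Borel probability measures on `X = lim← (𝕋, z ↦ z^{pq})` onto the
`×p, ×q`-invariant regular Borel probability measures on `𝕋`. -/
theorem stmt_13 (p q : ℕ) (hp : 2 ≤ p) (hq : 2 ≤ q) :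
    Set.BijOn (fun μ : Measure (Xlim p q) => μ.map (fun x => x.1 0))
      {μ : Measure (Xlim p q) | IsProbabilityMeasure μ ∧ μ.Regular ∧
        μ.map (TpX p q) = μ ∧ μ.map (TqX p q) = μ}
      {ν : Measure (AddCircle (1 : ℝ)) | IsProbabilityMeasure ν ∧ ν.Regular ∧
        ν.map (fun z => p • z) = ν ∧ ν.map (fun z => q • z) = ν} ∧
    ∀ (a b : ENNReal) (μ₁ μ₂ : Measure (Xlim p q)),
      (a • μ₁ + b • μ₂).map (fun x => x.1 0) =
        a • μ₁.map (fun x => x.1 0) + b • μ₂.map (fun x => x.1 0) := by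
  have hTpm : Measurable (TpX p q) :=
    measurable_coordSmul p q p (TpX p q) (fun x n => rfl)
  have hTqm : Measurable (TqX p q) :=
    measurable_coordSmul p q q (TqX p q) (fun x n => rfl)
  constructor
  · refine ⟨?_, ?_, ?_⟩
    · -- MapsTo
      rintro μ ⟨h1, _h2, h3, h4⟩
      haveI := h1
      haveI hpm : IsProbabilityMeasure (μ.map (fun x : Xlim p q => x.1 0)) :=
        Measure.isProbabilityMeasure_map (measurable_proj p q 0).aemeasurable
      have hcomm : ∀ (r : ℕ) (T : Xlim p q → Xlim p q), Measurable T →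
          μ.map T = μ →
          ((fun z : Circ => r • z) ∘ fun x : Xlim p q => x.1 0)
            = ((fun x : Xlim p q => x.1 0) ∘ T) →
          (μ.map (fun x : Xlim p q => x.1 0)).map (fun z => r • z)
            = μ.map (fun x : Xlim p q => x.1 0) := by
        intro r T hTm hinv hcomp
        calc (μ.map (fun x : Xlim p q => x.1 0)).map (fun z => r • z)
            = μ.map ((fun z : Circ => r • z) ∘ fun x : Xlim p q => x.1 0) :=
              Measure.map_map (measurable_smulC r) (measurable_proj p q 0)
          _ = μ.map ((fun x : Xlim p q => x.1 0) ∘ T) := by rw [hcomp]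
          _ = (μ.map T).map (fun x : Xlim p q => x.1 0) :=
              (Measure.map_map (measurable_proj p q 0) hTm).symm
          _ = μ.map (fun x : Xlim p q => x.1 0) := by rw [hinv]
      exact ⟨hpm, inferInstance, hcomm p (TpX p q) hTpm h3 rfl,
        hcomm q (TqX p q) hTqm h4 rfl⟩
    · -- InjOn
      rintro μ₁ ⟨h11, _, h13, h14⟩ μ₂ ⟨h21, _, h23, h24⟩ heq
      haveI := h11
      haveI := h21
      have heq' : μ₁.map (fun x : Xlim p q => x.1 0)
          = μ₂.map (fun x : Xlim p q => x.1 0) := heq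
      refine MeasureTheory.ext_of_generate_finite (cylSet p q)
        (gen_eq p q) (isPiSystem_cyl p q) ?_ (by simp)
      rintro S ⟨n, B, hB, rfl⟩
      rw [map_eval p q μ₁ (TpX p q) (TqX p q) (fun x n => rfl) (fun x n => rfl)
          h13 h14 hB,
        map_eval p q μ₂ (TpX p q) (TqX p q) (fun x n => rfl) (fun x n => rfl)
          h23 h24 hB, heq']
    · -- SurjOn
      rintro ν ⟨h1, h2, h3, h4⟩
      obtain ⟨μ, hμprob, hμcyl, hμ0⟩ := exists_invariant p q ν hp hq h1 h2 h3 h4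
      haveI := hμprob
      have hinv : ∀ (r : ℕ) (T : Xlim p q → Xlim p q) (hTm : Measurable T),
          (∀ n B, T ⁻¹' (proj p q n ⁻¹' B) =
            proj p q n ⁻¹' ((fun z : Circ => r • z) ⁻¹' B)) →
          ν.map (fun z => r • z) = ν → μ.map T = μ := by
        intro r T hTm hpre hrν
        haveI : IsProbabilityMeasure (μ.map T) :=
          Measure.isProbabilityMeasure_map hTm.aemeasurable
        refine MeasureTheory.ext_of_generate_finite (cylSet p q)
          (gen_eq p q) (isPiSystem_cyl p q) ?_ (by simp)
        rintro S ⟨n, B, hB, rfl⟩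
        calc μ.map T (proj p q n ⁻¹' B)
            = μ (T ⁻¹' (proj p q n ⁻¹' B)) :=
              Measure.map_apply hTm ((measurable_proj p q n) hB)
          _ = μ (proj p q n ⁻¹' ((fun z : Circ => r • z) ⁻¹' B)) := by
              rw [hpre n B]
          _ = ν ((fun z : Circ => r • z) ⁻¹' B) :=
              hμcyl ((measurable_smulC r) hB)
          _ = ν.map (fun z => r • z) B :=
              (Measure.map_apply (measurable_smulC r) hB).symm
          _ = ν B := by rw [hrν]
          _ = μ (proj p q n ⁻¹' B) := (hμcyl hB).symm
      refine ⟨μ, ⟨hμprob, inferInstance, ?_, ?_⟩, hμ0⟩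
      · exact hinv p (TpX p q) hTpm (fun n B => rfl) h3
      · exact hinv q (TqX p q) hTqm (fun n B => rfl) h4
  · -- affinity
    intro a b μ₁ μ₂
    calc (a • μ₁ + b • μ₂).map (fun x : Xlim p q => x.1 0)
        = (a • μ₁).map (fun x : Xlim p q => x.1 0)
          + (b • μ₂).map (fun x : Xlim p q => x.1 0) :=
          Measure.map_add _ _ (measurable_proj p q 0)
      _ = a • μ₁.map (fun x : Xlim p q => x.1 0)
          + b • μ₂.map (fun x : Xlim p q => x.1 0) := by
          rw [Measure.map_smul, Measure.map_smul]
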